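/- Let β > 0, S > 0, X₁', X₂' ∈ ℝ and let C : ℝ → ℝ be twice continuously differentiable. Define M : ℝ × ℝ × (0,∞) → ℂ by M(X₁,X₂,Z) = (β/(2πZ)) · exp{ iβ[(X₁−X₁')² − (X₂−X₂')²]/(2Z) − (2Z/S)·∫₀¹ C((X₁−X₂)·s + (X₁'−X₂')·(1−s)) ds }. Then for all X₁, X₂ ∈ ℝ and Z > 0, M satisfies the second-moment equation ∂_Z M = (i/(2β))·(∂²_{X₁} M − ∂²_{X₂} M) − (2/S)·C(X₁−X₂)·M. -/

import Mathlib

open Real Complex MeasureTheory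


lemma hasDerivAt_param (w f : ℝ → ℝ) (hw : Continuous w)
    (hf : Differentiable ℝ f) (hf' : Continuous (deriv f)) (v u : ℝ) :
    HasDerivAt (fun x => ∫ s in (0:ℝ)..1, w s * f (v + s * (x - v)))
      (∫ s in (0:ℝ)..1, w s * s * deriv f (v + s * (u - v))) u := by
  -- continuous bound on compact set
  obtain ⟨B, hB⟩ := (((isCompact_Icc (a := (0:ℝ)) (b := 1)).prod
      (isCompact_Icc (a := u - 1) (b := u + 1)))).exists_bound_of_continuousOn
      (f := fun p : ℝ × ℝ => w p.1 * p.1 * deriv f (v + p.1 * (p.2 - v)))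
      (Continuous.continuousOn (by fun_prop))
  have key := intervalIntegral.hasDerivAt_integral_of_dominated_loc_of_deriv_le
    (F := fun x s => w s * f (v + s * (x - v)))
    (F' := fun x s => w s * s * deriv f (v + s * (x - v)))
    (x₀ := u) (a := 0) (b := 1) (μ := volume) (bound := fun _ => B)
    (s := Metric.ball u 1) (Metric.ball_mem_nhds u one_pos)
    (Filter.Eventually.of_forall fun x => (Continuous.aestronglyMeasurable (by have := hf.continuous; fun_prop)))
    ((Continuous.intervalIntegrable (by have := hf.continuous; fun_prop) _ _))
    (Continuous.aestronglyMeasurable (by fun_prop)).restrict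
    (Filter.Eventually.of_forall fun t ht x hx => by
      have ht' : t ∈ Set.Icc (0:ℝ) 1 := by
        rw [Set.uIoc_of_le zero_le_one] at ht
        exact ⟨ht.1.le, ht.2⟩
      have hx' : x ∈ Set.Icc (u - 1) (u + 1) := by
        have := Metric.mem_ball.mp hx
        rw [Real.dist_eq, abs_lt] at this
        constructor <;> linarith [this.1, this.2]
      exact hB (t, x) (Set.mk_mem_prod ht' hx'))
    (intervalIntegrable_const)
    (Filter.Eventually.of_forall fun t ht x hx => by
      have h1 : HasDerivAt (fun x : ℝ => v + t * (x - v)) t x := by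
        simpa using (((hasDerivAt_id x).sub_const v).const_mul t).const_add v
      have h2 : HasDerivAt (fun x => w t * f (v + t * (x - v))) (w t * (deriv f (v + t * (x - v)) * t)) x :=
        ((hf _).hasDerivAt.comp x h1).const_mul (w t)
      show HasDerivAt (fun x => w t * f (v + t * (x - v))) (w t * t * deriv f (v + t * (x - v))) x
      convert h2 using 1
      ring)
  exact key.2

lemma hG_deriv (C : ℝ → ℝ) (hC : ContDiff ℝ 2 C) (v u : ℝ) :
    HasDerivAt (fun x => ∫ s in (0:ℝ)..1, C (v + s * (x - v)))
      (∫ s in (0:ℝ)..1, s * deriv C (v + s * (u - v))) u := by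
  have hC1 : ContDiff ℝ 1 (deriv C) :=
    ((contDiff_succ_iff_deriv (n := 1)).mp (by exact_mod_cast hC)).2.2
  have h := hasDerivAt_param (fun _ => 1) C continuous_const
    (hC.differentiable (by norm_num)) hC1.continuous v u
  simpa using h

lemma hD_deriv (C : ℝ → ℝ) (hC : ContDiff ℝ 2 C) (v u : ℝ) :
    HasDerivAt (fun x => ∫ s in (0:ℝ)..1, s * deriv C (v + s * (x - v)))
      (∫ s in (0:ℝ)..1, s * s * deriv (deriv C) (v + s * (u - v))) u := by
  have hC1 : ContDiff ℝ 1 (deriv C) :=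
    ((contDiff_succ_iff_deriv (n := 1)).mp (by exact_mod_cast hC)).2.2
  have h := hasDerivAt_param id (deriv C) continuous_id
    (contDiff_one_iff_deriv.mp hC1).1 (contDiff_one_iff_deriv.mp hC1).2 v u
  simpa using h

lemma key_identity (C : ℝ → ℝ) (hC : ContDiff ℝ 2 C) (v u : ℝ) :
    C u = (∫ s in (0:ℝ)..1, C (v + s * (u - v)))
      + (u - v) * ∫ s in (0:ℝ)..1, s * deriv C (v + s * (u - v)) := by
  have hCd : Differentiable ℝ C := hC.differentiable (by norm_num)
  have hC' : Continuous (deriv C) :=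
    ((contDiff_succ_iff_deriv (n := 1)).mp (by exact_mod_cast hC)).2.2.continuous
  have hderiv : ∀ s ∈ Set.uIcc (0:ℝ) 1,
      HasDerivAt (fun s : ℝ => s * C (v + s * (u - v)))
        (C (v + s * (u - v)) + s * (deriv C (v + s * (u - v)) * (u - v))) s := by
    intro s _
    have h1 : HasDerivAt (fun s : ℝ => v + s * (u - v)) (u - v) s := by
      simpa using ((hasDerivAt_id s).mul_const (u - v)).const_add v
    have h2 := (hCd _).hasDerivAt.comp s h1
    simpa [Pi.mul_def, Function.comp_def] using (hasDerivAt_id s).mul h2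
  have hint : IntervalIntegrable
      (fun s : ℝ => C (v + s * (u - v)) + s * (deriv C (v + s * (u - v)) * (u - v)))
      MeasureTheory.volume 0 1 := (Continuous.intervalIntegrable (by fun_prop) _ _)
  have hFTC := intervalIntegral.integral_eq_sub_of_hasDerivAt hderiv hint
  have hsplit : (∫ s in (0:ℝ)..1, (C (v + s * (u - v)) + s * (deriv C (v + s * (u - v)) * (u - v))))
      = (∫ s in (0:ℝ)..1, C (v + s * (u - v)))
        + (u - v) * ∫ s in (0:ℝ)..1, s * deriv C (v + s * (u - v)) := by
    rw [intervalIntegral.integral_add (Continuous.intervalIntegrable (by fun_prop) _ _)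
      (Continuous.intervalIntegrable (by fun_prop) _ _)]
    congr 1
    rw [← intervalIntegral.integral_const_mul]
    apply intervalIntegral.integral_congr
    intro s _
    ring
  rw [hsplit] at hFTC
  rw [hFTC]
  have hu : v + 1 * (u - v) = u := by ring
  rw [hu]
  ring

set_option maxHeartbeats 2000000 in
lemma final_alg (m i z s b' a b g d e c : ℂ) (hi : i ^ 2 = -1) (hz : z ≠ 0)
    (hs : s ≠ 0) (hb : b' ≠ 0) (hkey : c = g + (a - b) * d) :
    m * (-(1 / z) - i * b' * (a ^ 2 - b ^ 2) / 2 / z ^ 2 - 2 / s * g) =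
      i / (2 * b') *
        ((m * (i * b' * a / z - 2 / s * z * d) * (i * b' * a / z - 2 / s * z * d)
            + m * (i * b' / z - 2 / s * z * e))
          - (m * (-(i * b' * b) / z + 2 / s * z * d) * (-(i * b' * b) / z + 2 / s * z * d)
            + m * (-(i * b' / z) - 2 / s * z * e)))
        - 2 / s * c * m := by
  have h2 : (2:ℂ) ≠ 0 := two_ne_zero
  field_simp
  linear_combination (-(m * i * b' ^ 2 * s ^ 2 * (a ^ 2 - b ^ 2)) + 4 * m * b' * s * z ^ 2 * d * (a - b)
      - 2 * m * b' * z * s ^ 2) * hi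
    + (4 * m * b' * s * z ^ 2) * hkey

set_option maxHeartbeats 1000000 in
/-- The explicit single-mode second-moment formula
`M(X₁,X₂,Z) = (β/(2πZ)) exp{iβ[(X₁-X₁')² - (X₂-X₂')²]/(2Z)
  - (2Z/S) ∫₀¹ C((X₁-X₂)s + (X₁'-X₂')(1-s)) ds}`
solves the second-moment equation
`∂_Z M = (i/(2β))(∂²_{X₁} M - ∂²_{X₂} M) - (2/S) C(X₁-X₂) M`. -/
theorem second_moment_formula_solves_moment_equation
    (β S X₁' X₂' : ℝ) (hβ : 0 < β) (hS : 0 < S)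
    (C : ℝ → ℝ) (hC : ContDiff ℝ 2 C)
    (M : ℝ → ℝ → ℝ → ℂ)
    (hM : ∀ X₁ X₂ Z : ℝ, M X₁ X₂ Z =
      ((β : ℂ) / (2 * (π : ℂ) * (Z : ℂ))) *
        Complex.exp
          (Complex.I * (β : ℂ) * (((X₁ : ℂ) - (X₁' : ℂ)) ^ 2 - ((X₂ : ℂ) - (X₂' : ℂ)) ^ 2)
              / (2 * (Z : ℂ))
            - (2 * (Z : ℂ) / (S : ℂ)) *
              ((∫ s in (0:ℝ)..1, C ((X₁ - X₂) * s + (X₁' - X₂') * (1 - s)) : ℝ) : ℂ))) :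
    ∀ X₁ X₂ Z : ℝ, 0 < Z →
      deriv (fun z : ℝ => M X₁ X₂ z) Z =
        (Complex.I / (2 * (β : ℂ))) *
            (deriv (deriv (fun x : ℝ => M x X₂ Z)) X₁
              - deriv (deriv (fun x : ℝ => M X₁ x Z)) X₂)
          - (2 / (S : ℂ)) * ((C (X₁ - X₂) : ℝ) : ℂ) * M X₁ X₂ Z := by
  intro X₁ X₂ Z hZ
  have hZ0 : (Z:ℂ) ≠ 0 := by exact_mod_cast hZ.ne'
  have hS0 : (S:ℂ) ≠ 0 := by exact_mod_cast hS.ne'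
  have hβ0 : (β:ℂ) ≠ 0 := by exact_mod_cast hβ.ne'
  set v : ℝ := X₁' - X₂' with hv
  set G : ℝ → ℝ := fun u => ∫ s in (0:ℝ)..1, C (v + s * (u - v)) with hGdef
  set D : ℝ → ℝ := fun u => ∫ s in (0:ℝ)..1, s * deriv C (v + s * (u - v)) with hDdef
  set E : ℝ → ℝ := fun u => ∫ s in (0:ℝ)..1, s * s * deriv (deriv C) (v + s * (u - v)) with hEdef
  have hG : ∀ u, HasDerivAt G (D u) u := fun u => hG_deriv C hC v u
  have hD : ∀ u, HasDerivAt D (E u) u := fun u => hD_deriv C hC v u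
  have hkey : ∀ u, C u = G u + (u - v) * D u := fun u => key_identity C hC v u
  -- rewrite M
  have hint : ∀ x y : ℝ,
      (∫ s in (0:ℝ)..1, C ((x - y) * s + v * (1 - s))) = G (x - y) := by
    intro x y
    apply intervalIntegral.integral_congr
    intro s _
    congr 1
    ring
  have hMΦ : ∀ x y z : ℝ, M x y z =
      (β:ℂ) / (2 * (π:ℂ)) * ((z:ℂ))⁻¹ *
        Complex.exp (Complex.I * (β:ℂ) * (((x:ℂ) - (X₁':ℂ)) ^ 2 - ((y:ℂ) - (X₂':ℂ)) ^ 2) / 2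
            * ((z:ℂ))⁻¹ - 2 / (S:ℂ) * (z:ℂ) * ((G (x - y) : ℝ) : ℂ)) := by
    intro x y z
    rw [hM, hint]
    congr 1
    · ring
    · congr 1
      ring
  -- first x-derivative
  have hMx : ∀ x : ℝ, HasDerivAt (fun x' : ℝ => M x' X₂ Z)
      (M x X₂ Z * (Complex.I * (β:ℂ) * ((x:ℂ) - (X₁':ℂ)) / (Z:ℂ)
        - 2 / (S:ℂ) * (Z:ℂ) * ((D (x - X₂) : ℝ) : ℂ))) x := by
    intro x
    have hfun : (fun x' : ℝ => M x' X₂ Z) =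
        (fun x' : ℝ => (β:ℂ) / (2 * (π:ℂ)) * ((Z:ℂ))⁻¹ *
          Complex.exp (Complex.I * (β:ℂ) * (((x':ℂ) - (X₁':ℂ)) ^ 2 - ((X₂:ℂ) - (X₂':ℂ)) ^ 2) / 2
              * ((Z:ℂ))⁻¹ - 2 / (S:ℂ) * (Z:ℂ) * ((G (x' - X₂) : ℝ) : ℂ))) :=
      funext fun x' => hMΦ x' X₂ Z
    rw [hfun]
    have hsq : HasDerivAt (fun x' : ℝ => ((x':ℂ) - (X₁':ℂ)) ^ 2) (2 * ((x:ℂ) - (X₁':ℂ))) x := by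
      have : HasDerivAt (fun w : ℂ => (w - (X₁':ℂ)) ^ 2) (2 * (((x:ℝ):ℂ) - (X₁':ℂ))) ((x:ℝ):ℂ) := by
        simpa [Pi.pow_def] using ((hasDerivAt_id ((x:ℝ):ℂ)).sub_const ((X₁':ℂ))).pow 2
      exact this.comp_ofReal
    have hgx : HasDerivAt (fun x' : ℝ => G (x' - X₂)) (D (x - X₂)) x := by
      simpa [Function.comp_def] using (hG (x - X₂)).comp x ((hasDerivAt_id x).sub_const X₂)
    have hval := (((((hsq.sub_const (((X₂:ℂ) - (X₂':ℂ)) ^ 2)).const_mul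
        (Complex.I * (β:ℂ))).div_const 2).mul_const ((Z:ℂ))⁻¹).sub
        ((hgx.ofReal_comp).const_mul (2 / (S:ℂ) * (Z:ℂ)))).cexp.const_mul
        ((β:ℂ) / (2 * (π:ℂ)) * ((Z:ℂ))⁻¹)
    have h2 : (β:ℂ) / (2 * (π:ℂ)) * ((Z:ℂ))⁻¹ *
        (Complex.exp (Complex.I * (β:ℂ) * (((x:ℂ) - (X₁':ℂ)) ^ 2 - ((X₂:ℂ) - (X₂':ℂ)) ^ 2) / 2
            * ((Z:ℂ))⁻¹ - 2 / (S:ℂ) * (Z:ℂ) * ((G (x - X₂) : ℝ) : ℂ)) *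
          (Complex.I * (β:ℂ) * (2 * ((x:ℂ) - (X₁':ℂ))) / 2 * ((Z:ℂ))⁻¹
            - 2 / (S:ℂ) * (Z:ℂ) * ((D (x - X₂) : ℝ) : ℂ))) =
        M x X₂ Z * (Complex.I * (β:ℂ) * ((x:ℂ) - (X₁':ℂ)) / (Z:ℂ)
          - 2 / (S:ℂ) * (Z:ℂ) * ((D (x - X₂) : ℝ) : ℂ)) := by
      rw [hMΦ x X₂ Z]
      ring
    exact h2 ▸ hval
  -- second x-derivative
  have hΨx : HasDerivAt (fun x' : ℝ => Complex.I * (β:ℂ) * ((x':ℂ) - (X₁':ℂ)) / (Z:ℂ)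
      - 2 / (S:ℂ) * (Z:ℂ) * ((D (x' - X₂) : ℝ) : ℂ))
      (Complex.I * (β:ℂ) / (Z:ℂ) - 2 / (S:ℂ) * (Z:ℂ) * ((E (X₁ - X₂) : ℝ) : ℂ)) X₁ := by
    have h1 : HasDerivAt (fun x' : ℝ => Complex.I * (β:ℂ) * ((x':ℂ) - (X₁':ℂ)) / (Z:ℂ))
        (Complex.I * (β:ℂ) / (Z:ℂ)) X₁ := by
      have hcoe : HasDerivAt (fun x' : ℝ => ((x':ℂ) - (X₁':ℂ))) 1 X₁ := by
        have : HasDerivAt (fun w : ℂ => w - (X₁':ℂ)) 1 ((X₁:ℝ):ℂ) := by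
          simpa using (hasDerivAt_id ((X₁:ℝ):ℂ)).sub_const ((X₁':ℂ))
        exact this.comp_ofReal
      have := (hcoe.const_mul (Complex.I * (β:ℂ))).div_const (Z:ℂ)
      simpa using this
    have h2 : HasDerivAt (fun x' : ℝ => 2 / (S:ℂ) * (Z:ℂ) * ((D (x' - X₂) : ℝ) : ℂ))
        (2 / (S:ℂ) * (Z:ℂ) * ((E (X₁ - X₂) : ℝ) : ℂ)) X₁ := by
      have hdx : HasDerivAt (fun x' : ℝ => D (x' - X₂)) (E (X₁ - X₂)) X₁ := by
        simpa [Function.comp_def] using (hD (X₁ - X₂)).comp X₁ ((hasDerivAt_id X₁).sub_const X₂)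
      exact (hdx.ofReal_comp).const_mul _
    exact h1.sub h2
  have hx2 : deriv (deriv (fun x : ℝ => M x X₂ Z)) X₁ =
      M X₁ X₂ Z * (Complex.I * (β:ℂ) * ((X₁:ℂ) - (X₁':ℂ)) / (Z:ℂ)
          - 2 / (S:ℂ) * (Z:ℂ) * ((D (X₁ - X₂) : ℝ) : ℂ)) *
        (Complex.I * (β:ℂ) * ((X₁:ℂ) - (X₁':ℂ)) / (Z:ℂ)
          - 2 / (S:ℂ) * (Z:ℂ) * ((D (X₁ - X₂) : ℝ) : ℂ))
      + M X₁ X₂ Z * (Complex.I * (β:ℂ) / (Z:ℂ)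
          - 2 / (S:ℂ) * (Z:ℂ) * ((E (X₁ - X₂) : ℝ) : ℂ)) := by
    have hd1 : deriv (fun x : ℝ => M x X₂ Z) = fun x : ℝ =>
        M x X₂ Z * (Complex.I * (β:ℂ) * ((x:ℂ) - (X₁':ℂ)) / (Z:ℂ)
          - 2 / (S:ℂ) * (Z:ℂ) * ((D (x - X₂) : ℝ) : ℂ)) :=
      funext fun x => (hMx x).deriv
    rw [hd1]
    exact ((hMx X₁).mul hΨx).deriv
  -- y-derivatives
  have hMy : ∀ y : ℝ, HasDerivAt (fun y' : ℝ => M X₁ y' Z)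
      (M X₁ y Z * (-(Complex.I * (β:ℂ) * ((y:ℂ) - (X₂':ℂ))) / (Z:ℂ)
        + 2 / (S:ℂ) * (Z:ℂ) * ((D (X₁ - y) : ℝ) : ℂ))) y := by
    intro y
    have hfun : (fun y' : ℝ => M X₁ y' Z) =
        (fun y' : ℝ => (β:ℂ) / (2 * (π:ℂ)) * ((Z:ℂ))⁻¹ *
          Complex.exp (Complex.I * (β:ℂ) * (((X₁:ℂ) - (X₁':ℂ)) ^ 2 - ((y':ℂ) - (X₂':ℂ)) ^ 2) / 2
              * ((Z:ℂ))⁻¹ - 2 / (S:ℂ) * (Z:ℂ) * ((G (X₁ - y') : ℝ) : ℂ))) :=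
      funext fun y' => hMΦ X₁ y' Z
    rw [hfun]
    have hsq : HasDerivAt (fun y' : ℝ => ((y':ℂ) - (X₂':ℂ)) ^ 2) (2 * ((y:ℂ) - (X₂':ℂ))) y := by
      have : HasDerivAt (fun w : ℂ => (w - (X₂':ℂ)) ^ 2) (2 * (((y:ℝ):ℂ) - (X₂':ℂ))) ((y:ℝ):ℂ) := by
        simpa [Pi.pow_def] using ((hasDerivAt_id ((y:ℝ):ℂ)).sub_const ((X₂':ℂ))).pow 2
      exact this.comp_ofReal
    have hgy : HasDerivAt (fun y' : ℝ => G (X₁ - y')) (-D (X₁ - y)) y := by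
      have := (hG (X₁ - y)).comp y ((hasDerivAt_id y).const_sub X₁)
      simpa [Function.comp_def] using this
    have hval := (((((hsq.const_sub (((X₁:ℂ) - (X₁':ℂ)) ^ 2)).const_mul
        (Complex.I * (β:ℂ))).div_const 2).mul_const ((Z:ℂ))⁻¹).sub
        ((hgy.ofReal_comp).const_mul (2 / (S:ℂ) * (Z:ℂ)))).cexp.const_mul
        ((β:ℂ) / (2 * (π:ℂ)) * ((Z:ℂ))⁻¹)
    have h2 : (β:ℂ) / (2 * (π:ℂ)) * ((Z:ℂ))⁻¹ *
        (Complex.exp (Complex.I * (β:ℂ) * (((X₁:ℂ) - (X₁':ℂ)) ^ 2 - ((y:ℂ) - (X₂':ℂ)) ^ 2) / 2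
            * ((Z:ℂ))⁻¹ - 2 / (S:ℂ) * (Z:ℂ) * ((G (X₁ - y) : ℝ) : ℂ)) *
          (Complex.I * (β:ℂ) * -(2 * ((y:ℂ) - (X₂':ℂ))) / 2 * ((Z:ℂ))⁻¹
            - 2 / (S:ℂ) * (Z:ℂ) * ((-D (X₁ - y) : ℝ) : ℂ))) =
        M X₁ y Z * (-(Complex.I * (β:ℂ) * ((y:ℂ) - (X₂':ℂ))) / (Z:ℂ)
          + 2 / (S:ℂ) * (Z:ℂ) * ((D (X₁ - y) : ℝ) : ℂ)) := by
      rw [hMΦ X₁ y Z]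
      push_cast
      ring
    exact h2 ▸ hval
  have hΨy : HasDerivAt (fun y' : ℝ => -(Complex.I * (β:ℂ) * ((y':ℂ) - (X₂':ℂ))) / (Z:ℂ)
      + 2 / (S:ℂ) * (Z:ℂ) * ((D (X₁ - y') : ℝ) : ℂ))
      (-(Complex.I * (β:ℂ) / (Z:ℂ)) - 2 / (S:ℂ) * (Z:ℂ) * ((E (X₁ - X₂) : ℝ) : ℂ)) X₂ := by
    have h1 : HasDerivAt (fun y' : ℝ => -(Complex.I * (β:ℂ) * ((y':ℂ) - (X₂':ℂ))) / (Z:ℂ))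
        (-(Complex.I * (β:ℂ)) / (Z:ℂ)) X₂ := by
      have hcoe : HasDerivAt (fun y' : ℝ => ((y':ℂ) - (X₂':ℂ))) 1 X₂ := by
        have : HasDerivAt (fun w : ℂ => w - (X₂':ℂ)) 1 ((X₂:ℝ):ℂ) := by
          simpa using (hasDerivAt_id ((X₂:ℝ):ℂ)).sub_const ((X₂':ℂ))
        exact this.comp_ofReal
      have := ((hcoe.const_mul (Complex.I * (β:ℂ))).neg).div_const (Z:ℂ)
      simpa using this
    have h2 : HasDerivAt (fun y' : ℝ => 2 / (S:ℂ) * (Z:ℂ) * ((D (X₁ - y') : ℝ) : ℂ))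
        (-(2 / (S:ℂ) * (Z:ℂ) * ((E (X₁ - X₂) : ℝ) : ℂ))) X₂ := by
      have hdy : HasDerivAt (fun y' : ℝ => D (X₁ - y')) (-E (X₁ - X₂)) X₂ := by
        simpa [Function.comp_def] using (hD (X₁ - X₂)).comp X₂ ((hasDerivAt_id X₂).const_sub X₁)
      have := (hdy.ofReal_comp).const_mul (2 / (S:ℂ) * (Z:ℂ))
      simpa using this
    have : HasDerivAt (fun y' : ℝ => -(Complex.I * (β:ℂ) * ((y':ℂ) - (X₂':ℂ))) / (Z:ℂ)
        + 2 / (S:ℂ) * (Z:ℂ) * ((D (X₁ - y') : ℝ) : ℂ))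
        (-(Complex.I * (β:ℂ)) / (Z:ℂ) + -(2 / (S:ℂ) * (Z:ℂ) * ((E (X₁ - X₂) : ℝ) : ℂ))) X₂ := h1.add h2
    convert this using 1
    ring
  have hy2 : deriv (deriv (fun y : ℝ => M X₁ y Z)) X₂ =
      M X₁ X₂ Z * (-(Complex.I * (β:ℂ) * ((X₂:ℂ) - (X₂':ℂ))) / (Z:ℂ)
          + 2 / (S:ℂ) * (Z:ℂ) * ((D (X₁ - X₂) : ℝ) : ℂ)) *
        (-(Complex.I * (β:ℂ) * ((X₂:ℂ) - (X₂':ℂ))) / (Z:ℂ)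
          + 2 / (S:ℂ) * (Z:ℂ) * ((D (X₁ - X₂) : ℝ) : ℂ))
      + M X₁ X₂ Z * (-(Complex.I * (β:ℂ) / (Z:ℂ))
          - 2 / (S:ℂ) * (Z:ℂ) * ((E (X₁ - X₂) : ℝ) : ℂ)) := by
    have hd1 : deriv (fun y : ℝ => M X₁ y Z) = fun y : ℝ =>
        M X₁ y Z * (-(Complex.I * (β:ℂ) * ((y:ℂ) - (X₂':ℂ))) / (Z:ℂ)
          + 2 / (S:ℂ) * (Z:ℂ) * ((D (X₁ - y) : ℝ) : ℂ)) :=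
      funext fun y => (hMy y).deriv
    rw [hd1]
    exact ((hMy X₂).mul hΨy).deriv
  -- z-derivative
  have hMz : deriv (fun z : ℝ => M X₁ X₂ z) Z =
      M X₁ X₂ Z * (-(1 / (Z:ℂ))
        - Complex.I * (β:ℂ) * (((X₁:ℂ) - (X₁':ℂ)) ^ 2 - ((X₂:ℂ) - (X₂':ℂ)) ^ 2) / 2 / (Z:ℂ) ^ 2
        - 2 / (S:ℂ) * ((G (X₁ - X₂) : ℝ) : ℂ)) := by
    have hfun : (fun z : ℝ => M X₁ X₂ z) =
        (fun z : ℝ => (β:ℂ) / (2 * (π:ℂ)) * ((z:ℂ))⁻¹ *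
          Complex.exp (Complex.I * (β:ℂ) * (((X₁:ℂ) - (X₁':ℂ)) ^ 2 - ((X₂:ℂ) - (X₂':ℂ)) ^ 2) / 2
              * ((z:ℂ))⁻¹ - 2 / (S:ℂ) * (z:ℂ) * ((G (X₁ - X₂) : ℝ) : ℂ))) :=
      funext fun z => hMΦ X₁ X₂ z
    rw [hfun]
    have hinv : HasDerivAt (fun z : ℝ => ((z:ℂ))⁻¹) (-(((Z:ℝ):ℂ) ^ 2)⁻¹) Z :=
      (hasDerivAt_inv hZ0).comp_ofReal
    have hcoe : HasDerivAt (fun z : ℝ => ((z:ℂ))) 1 Z := (hasDerivAt_id ((Z:ℝ):ℂ)).comp_ofReal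
    have hA : HasDerivAt (fun z : ℝ => (β:ℂ) / (2 * (π:ℂ)) * ((z:ℂ))⁻¹)
        ((β:ℂ) / (2 * (π:ℂ)) * -(((Z:ℝ):ℂ) ^ 2)⁻¹) Z := hinv.const_mul _
    have hexp := ((hinv.const_mul
        (Complex.I * (β:ℂ) * (((X₁:ℂ) - (X₁':ℂ)) ^ 2 - ((X₂:ℂ) - (X₂':ℂ)) ^ 2) / 2)).sub
        (((hcoe.const_mul (2 / (S:ℂ))).mul_const ((G (X₁ - X₂) : ℝ) : ℂ)))).cexp
    have hval := hA.mul hexp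
    have h2 := hval.deriv
    erw [h2]
    simp only [Pi.sub_apply]
    rw [hMΦ X₁ X₂ Z]
    ring
  -- final assembly
  rw [hMz, hx2, hy2]
  have hkeyC : ((C (X₁ - X₂) : ℝ) : ℂ) = ((G (X₁ - X₂) : ℝ) : ℂ)
      + ((((X₁:ℂ) - (X₁':ℂ)) - ((X₂:ℂ) - (X₂':ℂ))) * ((D (X₁ - X₂) : ℝ) : ℂ)) := by
    have h := hkey (X₁ - X₂)
    rw [hv] at h
    have h' := congrArg (fun r : ℝ => ((r : ℂ))) h
    rw [h']
    push_cast
    ring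
  exact final_alg (M X₁ X₂ Z) Complex.I (Z:ℂ) (S:ℂ) (β:ℂ)
    ((X₁:ℂ) - (X₁':ℂ)) ((X₂:ℂ) - (X₂':ℂ))
    ((G (X₁ - X₂) : ℝ) : ℂ) ((D (X₁ - X₂) : ℝ) : ℂ) ((E (X₁ - X₂) : ℝ) : ℂ)
    ((C (X₁ - X₂) : ℝ) : ℂ) Complex.I_sq hZ0 hS0 hβ0 hkeyC
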